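/- arXiv:1510.03331 — 2 statements merged into one kernel-verified Lean document; each statement's English description precedes it below -/
import Mathlib

section
/- Let d and δ be two linear endomorphisms of a finite-dimensional vector space with d² = 0 and δ² = 0, which are disjoint in the sense that ker(δ) ∩ im(d) = {0} and ker(d) ∩ im(δ) = {0}. Set □ = dδ + δd. Then the space decomposes as the direct sum im(δ) ⊕ ker(□) ⊕ im(d), with im(δ) ⊕ ker(□) = ker(δ) and ker(□) ⊕ im(d) = ker(d). -/
/-- Hodge decomposition for a pair of disjoint differentials on a
finite-dimensional vector space. -/
theorem hodge_decomposition
    (K : Type*) [Field K]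
    (C : Type*) [AddCommGroup C] [Module K C] [FiniteDimensional K C]
    (d δ : C →ₗ[K] C)
    (hd : d ∘ₗ d = 0) (hδ : δ ∘ₗ δ = 0)
    (disj1 : LinearMap.ker δ ⊓ LinearMap.range d = ⊥)
    (disj2 : LinearMap.ker d ⊓ LinearMap.range δ = ⊥) :
    (LinearMap.range δ ⊓ LinearMap.ker (d ∘ₗ δ + δ ∘ₗ d) = ⊥) ∧
    ((LinearMap.range δ ⊔ LinearMap.ker (d ∘ₗ δ + δ ∘ₗ d)) ⊓ LinearMap.range d = ⊥) ∧
    (LinearMap.range δ ⊔ LinearMap.ker (d ∘ₗ δ + δ ∘ₗ d) ⊔ LinearMap.range d = ⊤) ∧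
    (LinearMap.range δ ⊔ LinearMap.ker (d ∘ₗ δ + δ ∘ₗ d) = LinearMap.ker δ) ∧
    (LinearMap.ker (d ∘ₗ δ + δ ∘ₗ d) ⊔ LinearMap.range d = LinearMap.ker d) := by
  set B : C →ₗ[K] C := d ∘ₗ δ + δ ∘ₗ d with hB
  have hdd : ∀ x, d (d x) = 0 := fun x => by
    simpa using LinearMap.ext_iff.mp hd x
  have hδδ : ∀ x, δ (δ x) = 0 := fun x => by
    simpa using LinearMap.ext_iff.mp hδ x
  have h1 : ∀ y, δ y = 0 → y ∈ LinearMap.range d → y = 0 := fun y hy1 hy2 => by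
    have : y ∈ LinearMap.ker δ ⊓ LinearMap.range d := ⟨hy1, hy2⟩
    rw [disj1] at this; simpa using this
  have h2 : ∀ y, d y = 0 → y ∈ LinearMap.range δ → y = 0 := fun y hy1 hy2 => by
    have : y ∈ LinearMap.ker d ⊓ LinearMap.range δ := ⟨hy1, hy2⟩
    rw [disj2] at this; simpa using this
  -- Characterization of ker B.
  have hkerB : LinearMap.ker B = LinearMap.ker d ⊓ LinearMap.ker δ := by
    ext x
    simp only [LinearMap.mem_ker, Submodule.mem_inf]
    constructor
    · intro hx
      have hx' : d (δ x) + δ (d x) = 0 := by simpa [hB] using hx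
      have e1 : d (δ (d x)) = 0 := by
        have := congrArg d hx'
        simpa [map_add, hdd] using this
      have e2 : δ (d x) = 0 := h2 _ e1 ⟨d x, rfl⟩
      have e3 : d (δ x) = 0 := by rw [e2, add_zero] at hx'; exact hx'
      have e4 : δ x = 0 := h2 _ e3 ⟨x, rfl⟩
      have e5 : d x = 0 := h1 _ e2 ⟨x, rfl⟩
      exact ⟨e5, e4⟩
    · rintro ⟨ha, hb⟩
      simp [hB, ha, hb]
  have hrd : LinearMap.range d ≤ LinearMap.ker d := by
    rintro _ ⟨x, rfl⟩; exact hdd x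
  have hrδ : LinearMap.range δ ≤ LinearMap.ker δ := by
    rintro _ ⟨x, rfl⟩; exact hδδ x
  -- ker B is disjoint from range d ⊔ range δ.
  have hdisj : LinearMap.ker B ⊓ (LinearMap.range d ⊔ LinearMap.range δ) = ⊥ := by
    rw [eq_bot_iff]
    rintro x ⟨hk, hs⟩
    rw [hkerB] at hk
    obtain ⟨y, hy, z, hz, rfl⟩ := Submodule.mem_sup.mp hs
    have hδz : δ z = 0 := hrδ hz
    have hδy : δ y = 0 := by
      have := hk.2
      simpa [map_add, hδz] using this
    have hy0 : y = 0 := h1 _ hδy hy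
    subst hy0
    have hdz : d z = 0 := by simpa using hk.1
    have : z = 0 := h2 _ hdz hz
    simp [this]
  -- range B ≤ range d ⊔ range δ
  have hrangeB : LinearMap.range B ≤ LinearMap.range d ⊔ LinearMap.range δ := by
    rintro _ ⟨x, rfl⟩
    have : B x = d (δ x) + δ (d x) := by simp [hB]
    rw [this]
    exact Submodule.add_mem_sup ⟨δ x, rfl⟩ ⟨d x, rfl⟩
  -- dimension count gives the full decomposition
  have htop : LinearMap.ker B ⊔ (LinearMap.range d ⊔ LinearMap.range δ) = ⊤ := by
    apply Submodule.eq_top_of_finrank_eq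
    have e1 := Submodule.finrank_sup_add_finrank_inf_eq (LinearMap.ker B)
      (LinearMap.range d ⊔ LinearMap.range δ)
    rw [hdisj] at e1
    simp only [finrank_bot, add_zero] at e1
    have e2 := LinearMap.finrank_range_add_finrank_ker B
    have e3 : Module.finrank K (LinearMap.range B) ≤
        Module.finrank K ↥(LinearMap.range d ⊔ LinearMap.range δ) :=
      Submodule.finrank_mono hrangeB
    have e4 : Module.finrank K
        ↥(LinearMap.ker B ⊔ (LinearMap.range d ⊔ LinearMap.range δ)) ≤
        Module.finrank K C := Submodule.finrank_le _
    omega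
  -- statement 4
  have s4 : LinearMap.range δ ⊔ LinearMap.ker B = LinearMap.ker δ := by
    apply le_antisymm
    · exact sup_le hrδ (hkerB ▸ inf_le_right)
    · intro x hx
      have hx' : δ x = 0 := hx
      have hxmem : x ∈ LinearMap.ker B ⊔ (LinearMap.range d ⊔ LinearMap.range δ) := by
        rw [htop]; trivial
      obtain ⟨k, hk, y, hy, rfl⟩ := Submodule.mem_sup.mp hxmem
      obtain ⟨u, hu, v, hv, rfl⟩ := Submodule.mem_sup.mp hy
      have hδk : δ k = 0 := (hkerB ▸ hk).2
      have hδv : δ v = 0 := hrδ hv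
      have hδu : δ u = 0 := by
        have : δ (k + (u + v)) = 0 := hx'
        simpa [map_add, hδk, hδv] using this
      have hu0 : u = 0 := h1 _ hδu hu
      subst hu0
      have : k + (0 + v) = v + k := by abel
      rw [this]
      exact Submodule.add_mem_sup hv hk
  -- statement 5
  have s5 : LinearMap.ker B ⊔ LinearMap.range d = LinearMap.ker d := by
    apply le_antisymm
    · exact sup_le (hkerB ▸ inf_le_left) hrd
    · intro x hx
      have hx' : d x = 0 := hx
      have hxmem : x ∈ LinearMap.ker B ⊔ (LinearMap.range d ⊔ LinearMap.range δ) := by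
        rw [htop]; trivial
      obtain ⟨k, hk, y, hy, rfl⟩ := Submodule.mem_sup.mp hxmem
      obtain ⟨u, hu, v, hv, rfl⟩ := Submodule.mem_sup.mp hy
      have hdk : d k = 0 := (hkerB ▸ hk).1
      have hdu : d u = 0 := hrd hu
      have hdv : d v = 0 := by
        have : d (k + (u + v)) = 0 := hx'
        simpa [map_add, hdk, hdu] using this
      have hv0 : v = 0 := h2 _ hdv hv
      subst hv0
      have : k + (u + 0) = k + u := by abel
      rw [this]
      exact Submodule.add_mem_sup hk hu
  refine ⟨?_, ?_, ?_, s4, s5⟩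
  · rw [eq_bot_iff]
    rintro x ⟨hx1, hx2⟩
    have hdx : d x = 0 := (hkerB ▸ hx2).1
    have : x = 0 := h2 _ hdx hx1
    simp [this]
  · rw [s4]; exact disj1
  · rw [eq_top_iff, ← htop]
    apply sup_le
    · exact le_sup_of_le_left le_sup_right
    · apply sup_le
      · exact le_sup_right
      · exact le_sup_of_le_left le_sup_left
end

section
/- Let d and δ be disjoint differentials on a finite-dimensional vector space C (i.e. d² = δ² = 0, ker(δ) ∩ im(d) = 0, ker(d) ∩ im(δ) = 0) and □ = dδ + δd. Then the homology ker(δ)/im(δ) is isomorphic to ker(□), and likewise the cohomology ker(d)/im(d) is isomorphic to ker(□). -/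
open LinearMap Submodule Module

theorem aux_homology_iso
    (K : Type*) [Field K]
    (C : Type*) [AddCommGroup C] [Module K C] [FiniteDimensional K C]
    (d δ : C →ₗ[K] C)
    (hd : d ∘ₗ d = 0) (hδ : δ ∘ₗ δ = 0)
    (disj1 : LinearMap.ker δ ⊓ LinearMap.range d = ⊥)
    (disj2 : LinearMap.ker d ⊓ LinearMap.range δ = ⊥) :
    Nonempty ((LinearMap.ker δ ⧸
        Submodule.comap (LinearMap.ker δ).subtype (LinearMap.range δ)) ≃ₗ[K]
      LinearMap.ker (d ∘ₗ δ + δ ∘ₗ d)) := by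
  have hdd : ∀ x, d (d x) = 0 := fun x => congrFun (congrArg DFunLike.coe hd) x
  have hδδ : ∀ x, δ (δ x) = 0 := fun x => congrFun (congrArg DFunLike.coe hδ) x
  have h1 : ∀ x, δ x = 0 → x ∈ LinearMap.range d → x = 0 := by
    intro x hx hx'
    have : x ∈ LinearMap.ker δ ⊓ LinearMap.range d := ⟨hx, hx'⟩
    rw [disj1] at this; exact this
  have h2 : ∀ x, d x = 0 → x ∈ LinearMap.range δ → x = 0 := by
    intro x hx hx'
    have : x ∈ LinearMap.ker d ⊓ LinearMap.range δ := ⟨hx, hx'⟩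
    rw [disj2] at this; exact this
  -- kernel of the Laplacian is ker d ⊓ ker δ
  have hbox : LinearMap.ker (d ∘ₗ δ + δ ∘ₗ d) = LinearMap.ker d ⊓ LinearMap.ker δ := by
    ext x
    simp only [LinearMap.mem_ker, LinearMap.add_apply, LinearMap.comp_apply,
      Submodule.mem_inf]
    constructor
    · intro h
      have hu : d (δ x) = 0 := by
        refine h2 _ (hdd (δ x)) ⟨-(d x), ?_⟩
        have hδd : δ (d x) = -(d (δ x)) := by
          rw [eq_neg_iff_add_eq_zero, add_comm]; exact h
        rw [map_neg, hδd, neg_neg]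
      have hv : δ (d x) = 0 := by rw [hu, zero_add] at h; exact h
      exact ⟨h1 _ hv ⟨x, rfl⟩, h2 _ hu ⟨x, rfl⟩⟩
    · rintro ⟨h1', h2'⟩
      rw [h1', h2', map_zero, map_zero, add_zero]
  have himδ : LinearMap.range δ ≤ LinearMap.ker δ := by
    rintro x ⟨y, rfl⟩; exact hδδ y
  -- dimension count
  have hrn1 := LinearMap.finrank_range_add_finrank_ker d
  have hrn2 := LinearMap.finrank_range_add_finrank_ker δ
  have hle1 : finrank K (LinearMap.ker δ) + finrank K (LinearMap.range d) ≤ finrank K C :=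
    Submodule.finrank_add_finrank_le_of_disjoint (disjoint_iff.mpr disj1)
  have hle2 : finrank K (LinearMap.ker d) + finrank K (LinearMap.range δ) ≤ finrank K C :=
    Submodule.finrank_add_finrank_le_of_disjoint (disjoint_iff.mpr disj2)
  have htop : LinearMap.ker d ⊔ LinearMap.range δ = ⊤ :=
    Submodule.eq_top_of_disjoint _ _ (by omega) (disjoint_iff.mpr disj2)
  set p := Submodule.comap (LinearMap.ker δ).subtype (LinearMap.range δ) with hp
  set q := Submodule.comap (LinearMap.ker δ).subtype
      (LinearMap.ker d ⊓ LinearMap.ker δ) with hq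
  have hcompl : IsCompl p q := by
    constructor
    · rw [disjoint_iff, eq_bot_iff]
      rintro ⟨x, hx⟩ ⟨hxp, hxq⟩
      have hx0 : x = 0 := h2 x hxq.1 hxp
      simpa [Submodule.mem_bot, Subtype.ext_iff] using hx0
    · rw [codisjoint_iff, eq_top_iff]
      rintro ⟨x, hx⟩ -
      have hxtop : x ∈ LinearMap.ker d ⊔ LinearMap.range δ := htop ▸ Submodule.mem_top
      obtain ⟨u, hu, v, hv, huv⟩ := Submodule.mem_sup.mp hxtop
      have hvker : v ∈ LinearMap.ker δ := himδ hv
      have huker : u ∈ LinearMap.ker δ := by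
        have : u = x - v := by rw [← huv, add_sub_cancel_right]
        rw [LinearMap.mem_ker, this, map_sub, hx, hvker, sub_zero]
      refine Submodule.mem_sup.mpr ⟨⟨v, hvker⟩, hv, ⟨u, huker⟩, ⟨hu, huker⟩, ?_⟩
      exact Subtype.ext (by simpa [add_comm] using huv)
  exact ⟨(Submodule.quotientEquivOfIsCompl p q hcompl).trans
    ((Submodule.comapSubtypeEquivOfLe inf_le_right).trans
      (LinearEquiv.ofEq _ _ hbox).symm)⟩

/-- for disjoint differentials `d`, `δ` on a finite-dimensional vector space
with `□ = dδ + δd`, the homology `ker(δ)/im(δ)` and the cohomology `ker(d)/im(d)` are both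
isomorphic to `ker(□)`. -/
theorem homology_iso_harmonics
    (K : Type*) [Field K]
    (C : Type*) [AddCommGroup C] [Module K C] [FiniteDimensional K C]
    (d δ : C →ₗ[K] C)
    (hd : d ∘ₗ d = 0) (hδ : δ ∘ₗ δ = 0)
    (disj1 : LinearMap.ker δ ⊓ LinearMap.range d = ⊥)
    (disj2 : LinearMap.ker d ⊓ LinearMap.range δ = ⊥) :
    Nonempty ((LinearMap.ker δ ⧸
        Submodule.comap (LinearMap.ker δ).subtype (LinearMap.range δ)) ≃ₗ[K]
      LinearMap.ker (d ∘ₗ δ + δ ∘ₗ d)) ∧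
    Nonempty ((LinearMap.ker d ⧸
        Submodule.comap (LinearMap.ker d).subtype (LinearMap.range d)) ≃ₗ[K]
      LinearMap.ker (d ∘ₗ δ + δ ∘ₗ d)) := by
  refine ⟨aux_homology_iso K C d δ hd hδ disj1 disj2, ?_⟩
  obtain ⟨e⟩ := aux_homology_iso K C δ d hδ hd disj2 disj1
  exact ⟨e.trans (LinearEquiv.ofEq _ _ (by rw [add_comm]))⟩
end
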